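/- For a bilinear form k on a Euclidean vector space and p ≥ 2, the contraction of its p-th exterior power satisfies c(k^p) = p·(c k)·k^{p-1} − p(p-1)·(k∘k)·k^{p-2}, where c is the Ricci contraction, products of double forms are exterior products, and k∘k is the composition product (corresponding to the square of the associated endomorphism). -/

import Mathlib

/-
Double forms on the Euclidean space ℝⁿ, following Labbi's formalism.
A (p,q) double form is modelled as a real-valued function of a p-tuple and a
q-tuple of vectors (the relevant ones being those multilinear and alternating
in each block, i.e. bilinear forms on Λ^p V × Λ^q V).
-/

open scoped BigOperators RealInnerProductSpace

noncomputable section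

abbrev EucV (n : ℕ) := EuclideanSpace ℝ (Fin n)

/-- A (p,q) double form on ℝⁿ: a bilinear form on Λ^p V × Λ^q V, viewed as a
multilinear form skew-symmetric in the first p and in the last q arguments. -/
abbrev DF (n p q : ℕ) := (Fin p → EucV n) → (Fin q → EucV n) → ℝ

variable {n : ℕ}

/-- standard orthonormal basis of ℝⁿ -/
def bv (n : ℕ) (i : Fin n) : EucV n := EuclideanSpace.single i 1

/-- strictly increasing multi-indices of length p -/
def Incr (n p : ℕ) : Finset (Fin p → Fin n) :=
  Finset.univ.filter (fun f => ∀ a b : Fin p, a < b → f a < f b)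

/-- sign of a permutation, as a real number -/
def sgn {m : ℕ} (σ : Equiv.Perm (Fin m)) : ℝ := ((Equiv.Perm.sign σ : ℤ) : ℝ)

/-- exterior product of double forms:
(θ₁⊗θ₂)(θ₃⊗θ₄) = (θ₁∧θ₃)⊗(θ₂∧θ₄). -/
def extMul {p q r s : ℕ} (ω : DF n p q) (η : DF n r s) : DF n (p + r) (q + s) :=
  fun x y =>
    (p.factorial * r.factorial * q.factorial * s.factorial : ℝ)⁻¹ *
      ∑ σ : Equiv.Perm (Fin (p + r)), ∑ τ : Equiv.Perm (Fin (q + s)),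
        sgn σ * sgn τ *
          (ω (fun i => x (σ (Fin.castAdd r i))) (fun j => y (τ (Fin.castAdd s j))) *
            η (fun i => x (σ (Fin.natAdd p i))) (fun j => y (τ (Fin.natAdd q j))))

/-- composition (Greub) product of double forms: for ω₁ ∈ D^{p,q}, ω₂ ∈ D^{r,p},
(ω₁ ∘ ω₂)(u,v) = Σ_{i₁<…<i_p} ω₂(u, e_I) ω₁(e_I, v); it corresponds to the
composition of the associated operators on ΛV. -/
def compDF {p q r : ℕ} (ω₁ : DF n p q) (ω₂ : DF n r p) : DF n r q :=
  fun u v => ∑ f ∈ Incr n p, ω₂ u (fun i => bv n (f i)) * ω₁ (fun i => bv n (f i)) v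

/-- transpose of a double form -/
def transDF {p q : ℕ} (ω : DF n p q) : DF n q p := fun u v => ω v u

/-- re-indexing cast of a double form -/
def castDF {p q p' q' : ℕ} (hp : p = p') (hq : q = q') (ω : DF n p q) : DF n p' q' :=
  fun x y => ω (x ∘ Fin.cast hp) (y ∘ Fin.cast hq)

/-- Ricci contraction of double forms -/
def contractDF {p q : ℕ} (ω : DF n (p + 1) (q + 1)) : DF n p q :=
  fun x y => ∑ i : Fin n, ω (Fin.cons (bv n i) x) (Fin.cons (bv n i) y)

/-- iterated contraction c^k -/
def contractIterDF {p q : ℕ} : (k : ℕ) → DF n (p + k) (q + k) → DF n p q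
  | 0, ω => ω
  | k + 1, ω => contractIterDF k (contractDF ω)

/-- interior product i_ψ of double forms (the adjoint of left exterior
multiplication by ψ): for ψ ∈ D^{r,s} and ω ∈ D^{r+p,s+q},
(i_ψ ω)(x;y) = Σ_{I,J increasing} ψ(e_I;e_J) ω(e_I,x;e_J,y). -/
def interiorDF {r s p q : ℕ} (ψ : DF n r s) (ω : DF n (r + p) (s + q)) : DF n p q :=
  fun x y =>
    ∑ f ∈ Incr n r, ∑ g ∈ Incr n s,
      ψ (fun i => bv n (f i)) (fun j => bv n (g j)) *
        ω (Fin.append (fun i => bv n (f i)) x) (Fin.append (fun j => bv n (g j)) y)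

/-- inner product of (p,q) double forms, induced by the inner products of the
exterior powers -/
def innerDF {p q : ℕ} (ω η : DF n p q) : ℝ :=
  ∑ f ∈ Incr n p, ∑ g ∈ Incr n q,
    ω (fun i => bv n (f i)) (fun j => bv n (g j)) *
      η (fun i => bv n (f i)) (fun j => bv n (g j))

/-- the metric of ℝⁿ as a (1,1) double form -/
def gDF (n : ℕ) : DF n 1 1 := fun u v => (inner ℝ (u 0) (v 0) : ℝ)

/-- exterior powers of a (1,1) double form -/
def powDF (h : DF n 1 1) : (p : ℕ) → DF n p p
  | 0 => fun _ _ => 1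
  | p + 1 => extMul (powDF h p) h

/-- exterior product h₁h₂⋯h_p of a family of (1,1) double forms -/
def extProdDF : {p : ℕ} → (Fin p → DF n 1 1) → DF n p p
  | 0, _ => fun _ _ => 1
  | p + 1, h => extMul (extProdDF fun i => h i.castSucc) (h (Fin.last p))

/-- determinant (volume form) of an n-tuple of vectors of ℝⁿ -/
def volDF (n : ℕ) (v : Fin n → EucV n) : ℝ :=
  Matrix.det (Matrix.of fun i j => (inner ℝ (bv n i) (v j) : ℝ))

/-- double Hodge star operator on double forms:
*(θ₁⊗θ₂) = (*θ₁)⊗(*θ₂), given here by the classical formula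
(*α)(x) = Σ_{I increasing} α(e_I) vol(e_I, x) applied in each slot. -/
def starDF {p q : ℕ} (hp : p ≤ n) (hq : q ≤ n) (ω : DF n p q) : DF n (n - p) (n - q) :=
  fun x y =>
    ∑ f ∈ Incr n p, ∑ g ∈ Incr n q,
      ω (fun i => bv n (f i)) (fun j => bv n (g j)) *
        volDF n (Fin.append (fun i => bv n (f i)) x ∘ Fin.cast (Nat.add_sub_cancel' hp).symm) *
        volDF n (Fin.append (fun j => bv n (g j)) y ∘ Fin.cast (Nat.add_sub_cancel' hq).symm)

/-- the endomorphism h̄ associated to a bilinear form h: ⟪h̄ v, w⟫ = h(v,w) -/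
def hbar (h : DF n 1 1) (v : EucV n) : EucV n :=
  ∑ j : Fin n, h ![v] ![bv n j] • bv n j

/-- the adjoint endomorphism h̄*: ⟪v, h̄* w⟫ = h(v,w) -/
def hbarAdj (h : DF n 1 1) (v : EucV n) : EucV n :=
  ∑ i : Fin n, h ![bv n i] ![v] • bv n i

/-- the right extension ĥ_R = id ⊗ ĥ of (the exterior-algebra extension ĥ of) h̄,
acting on double forms via the metric identification with double vectors -/
def hhatR {p q : ℕ} (h : DF n 1 1) (ω : DF n p q) : DF n p q :=
  fun x y => ω x (fun j => hbarAdj h (y j))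

/-- determinant of (the endomorphism associated to) a bilinear form -/
def detDF (h : DF n 1 1) : ℝ :=
  Matrix.det (Matrix.of fun i j : Fin n => h ![bv n i] ![bv n j])

/-- omit one member of a family -/
def omit1 {α : Sort*} {p : ℕ} (h : Fin (p + 1) → α) (j : Fin (p + 1)) : Fin p → α :=
  fun i => h (j.succAbove i)

/-- omit two members of a family -/
def omit2 {α : Sort*} {p : ℕ} (h : Fin (p + 2) → α) (j k : Fin (p + 2)) (hjk : j < k) :
    Fin p → α :=
  omit1 (omit1 h k) ⟨j.1, by have h1 : j.1 < k.1 := hjk; have h2 : k.1 < p + 2 := k.isLt; omega⟩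

/-- the first Bianchi map 𝔖 : D^{p,q+1} → D^{p+1,q} -/
def bianchiDF {p q : ℕ} (ω : DF n p (q + 1)) : DF n (p + 1) q :=
  fun x y =>
    (p.factorial : ℝ)⁻¹ *
      ∑ σ : Equiv.Perm (Fin (p + 1)),
        sgn σ * ω (fun i => x (σ i.castSucc)) (Fin.cons (x (σ (Fin.last p))) y)

/-- the alternating operator Alt : D^{p,p} → Λ^{2p} -/
def altDF {p : ℕ} (ω : DF n p p) : (Fin (p + p) → EucV n) → ℝ :=
  fun v =>
    ((p + p).factorial : ℝ)⁻¹ *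
      ∑ σ : Equiv.Perm (Fin (p + p)),
        sgn σ * ω (fun i => v (σ (Fin.castAdd p i))) (fun i => v (σ (Fin.natAdd p i)))

/-- exterior powers of a (2,2) double form -/
def pow2DF (R : DF n 2 2) : (k : ℕ) → DF n (2 * k) (2 * k)
  | 0 => fun _ _ => 1
  | k + 1 => extMul (pow2DF R k) R

/-- the diagonal simple double form (v₁∧…∧v_p) ⊗ (v₁∧…∧v_p), as a bilinear form -/
def simpleDiag {p : ℕ} (v : Fin p → EucV n) : DF n p p :=
  fun x y =>
    Matrix.det (Matrix.of fun i j => (inner ℝ (v i) (x j) : ℝ)) *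
      Matrix.det (Matrix.of fun i j => (inner ℝ (v i) (y j) : ℝ))


section Aux
open Equiv Finset

variable {n : ℕ}

lemma sgn_mul {m : ℕ} (σ τ : Equiv.Perm (Fin m)) : sgn (σ * τ) = sgn σ * sgn τ := by
  simp [sgn, Equiv.Perm.sign_mul]

lemma sgn_sq {m : ℕ} (σ : Equiv.Perm (Fin m)) : sgn σ * sgn σ = 1 := by
  rcases Int.units_eq_one_or (Equiv.Perm.sign σ) with h | h <;> simp [sgn, h]

/-- extend a permutation of the left block -/
def ePermL (p r : ℕ) (α : Equiv.Perm (Fin p)) : Equiv.Perm (Fin (p + r)) :=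
  (finSumFinEquiv (m := p) (n := r)).permCongr (Equiv.sumCongr α 1)

/-- extend a permutation of the right block -/
def ePermR (p r : ℕ) (α : Equiv.Perm (Fin r)) : Equiv.Perm (Fin (p + r)) :=
  (finSumFinEquiv (m := p) (n := r)).permCongr (Equiv.sumCongr 1 α)

lemma ePermL_castAdd (p r : ℕ) (α : Equiv.Perm (Fin p)) (i : Fin p) :
    ePermL p r α (Fin.castAdd r i) = Fin.castAdd r (α i) := by
  simp [ePermL, Equiv.permCongr_apply]

lemma ePermL_natAdd (p r : ℕ) (α : Equiv.Perm (Fin p)) (j : Fin r) :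
    ePermL p r α (Fin.natAdd p j) = Fin.natAdd p j := by
  simp [ePermL, Equiv.permCongr_apply]

lemma ePermR_castAdd (p r : ℕ) (α : Equiv.Perm (Fin r)) (i : Fin p) :
    ePermR p r α (Fin.castAdd r i) = Fin.castAdd r i := by
  simp [ePermR, Equiv.permCongr_apply]

lemma ePermR_natAdd (p r : ℕ) (α : Equiv.Perm (Fin r)) (j : Fin r) :
    ePermR p r α (Fin.natAdd p j) = Fin.natAdd p (α j) := by
  simp [ePermR, Equiv.permCongr_apply]

lemma sgn_ePermL (p r : ℕ) (α : Equiv.Perm (Fin p)) : sgn (ePermL p r α) = sgn α := by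
  simp [ePermL, sgn, Equiv.Perm.sign_permCongr, Equiv.Perm.sign_sumCongr]

lemma sgn_ePermR (p r : ℕ) (α : Equiv.Perm (Fin r)) : sgn (ePermR p r α) = sgn α := by
  simp [ePermR, sgn, Equiv.Perm.sign_permCongr, Equiv.Perm.sign_sumCongr]

lemma collapseL (p r : ℕ) (G : (Fin p → Fin (p + r)) → (Fin r → Fin (p + r)) → ℝ) :
    ∑ α : Equiv.Perm (Fin p), ∑ σ : Equiv.Perm (Fin (p + r)),
        sgn σ * sgn α * G (fun i => σ (Fin.castAdd r (α i))) (fun j => σ (Fin.natAdd p j))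
      = (p.factorial : ℝ) * ∑ σ : Equiv.Perm (Fin (p + r)),
          sgn σ * G (fun i => σ (Fin.castAdd r i)) (fun j => σ (Fin.natAdd p j)) := by
  have key : ∀ α : Equiv.Perm (Fin p),
      (∑ σ : Equiv.Perm (Fin (p + r)),
        sgn σ * sgn α * G (fun i => σ (Fin.castAdd r (α i))) (fun j => σ (Fin.natAdd p j)))
      = ∑ σ : Equiv.Perm (Fin (p + r)),
          sgn σ * G (fun i => σ (Fin.castAdd r i)) (fun j => σ (Fin.natAdd p j)) := by
    intro α
    refine (Fintype.sum_equiv (Equiv.mulRight (ePermL p r α)).symm _ _ ?_).symm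
    intro σ
    have h1 : ∀ i, (σ * (ePermL p r α)⁻¹) (Fin.castAdd r (α i)) = σ (Fin.castAdd r i) := by
      intro i
      rw [← ePermL_castAdd p r α i, Equiv.Perm.mul_apply, Equiv.Perm.coe_inv, Equiv.symm_apply_apply]
    have h2 : ∀ j, (σ * (ePermL p r α)⁻¹) (Fin.natAdd p j) = σ (Fin.natAdd p j) := by
      intro j
      have h : (ePermL p r α)⁻¹ (Fin.natAdd p j) = Fin.natAdd p j := by
        conv_lhs => rw [← ePermL_natAdd p r α j]
        exact Equiv.symm_apply_apply _ _
      rw [Equiv.Perm.mul_apply, h]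
    have hs : sgn (σ * (ePermL p r α)⁻¹) * sgn α = sgn σ := by
      have hv : sgn ((ePermL p r α)⁻¹) = sgn α := by
        simp only [sgn, Equiv.Perm.sign_inv]
        rw [show Equiv.Perm.sign (ePermL p r α) = Equiv.Perm.sign α from by
          rw [ePermL, Equiv.Perm.sign_permCongr, Equiv.Perm.sign_sumCongr,
            Equiv.Perm.sign_one, mul_one]]
      rw [sgn_mul, hv, mul_assoc, sgn_sq, mul_one]
    simp only [Equiv.mulRight_symm_apply] at *
    rw [← hs]
    simp only [h1, h2]
  rw [Finset.sum_congr rfl (fun α _ => key α), Finset.sum_const, Finset.card_univ,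
    Fintype.card_perm, Fintype.card_fin, nsmul_eq_mul]

lemma collapseR (p r : ℕ) (G : (Fin p → Fin (p + r)) → (Fin r → Fin (p + r)) → ℝ) :
    ∑ α : Equiv.Perm (Fin r), ∑ σ : Equiv.Perm (Fin (p + r)),
        sgn σ * sgn α * G (fun i => σ (Fin.castAdd r i)) (fun j => σ (Fin.natAdd p (α j)))
      = (r.factorial : ℝ) * ∑ σ : Equiv.Perm (Fin (p + r)),
          sgn σ * G (fun i => σ (Fin.castAdd r i)) (fun j => σ (Fin.natAdd p j)) := by
  have key : ∀ α : Equiv.Perm (Fin r),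
      (∑ σ : Equiv.Perm (Fin (p + r)),
        sgn σ * sgn α * G (fun i => σ (Fin.castAdd r i)) (fun j => σ (Fin.natAdd p (α j))))
      = ∑ σ : Equiv.Perm (Fin (p + r)),
          sgn σ * G (fun i => σ (Fin.castAdd r i)) (fun j => σ (Fin.natAdd p j)) := by
    intro α
    refine (Fintype.sum_equiv (Equiv.mulRight (ePermR p r α)).symm _ _ ?_).symm
    intro σ
    have h1 : ∀ i, (σ * (ePermR p r α)⁻¹) (Fin.castAdd r i) = σ (Fin.castAdd r i) := by
      intro i
      have h : (ePermR p r α)⁻¹ (Fin.castAdd r i) = Fin.castAdd r i := by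
        conv_lhs => rw [← ePermR_castAdd p r α i]
        exact Equiv.symm_apply_apply _ _
      rw [Equiv.Perm.mul_apply, h]
    have h2 : ∀ j, (σ * (ePermR p r α)⁻¹) (Fin.natAdd p (α j)) = σ (Fin.natAdd p j) := by
      intro j
      rw [← ePermR_natAdd p r α j, Equiv.Perm.mul_apply, Equiv.Perm.coe_inv, Equiv.symm_apply_apply]
    have hs : sgn (σ * (ePermR p r α)⁻¹) * sgn α = sgn σ := by
      have hv : sgn ((ePermR p r α)⁻¹) = sgn α := by
        simp only [sgn, Equiv.Perm.sign_inv]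
        rw [show Equiv.Perm.sign (ePermR p r α) = Equiv.Perm.sign α from by
          rw [ePermR, Equiv.Perm.sign_permCongr, Equiv.Perm.sign_sumCongr,
            Equiv.Perm.sign_one, one_mul]]
      rw [sgn_mul, hv, mul_assoc, sgn_sq, mul_one]
    simp only [Equiv.mulRight_symm_apply] at *
    rw [← hs]
    simp only [h1, h2]
  rw [Finset.sum_congr rfl (fun α _ => key α), Finset.sum_const, Finset.card_univ,
    Fintype.card_perm, Fintype.card_fin, nsmul_eq_mul]

end Aux
section PartB
open Equiv Finset

variable {n : ℕ}

lemma fin1_fun (f : Fin 1 → EucV n) : f = ![f 0] := by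
  funext i
  fin_cases i
  rfl

lemma apply_fin1 (k : DF n 1 1) (f g : Fin 1 → EucV n) : k f g = k ![f 0] ![g 0] := by
  conv_lhs => rw [fin1_fun f, fin1_fun g]

lemma sum_perm4 {A B : Type*} [Fintype A] [Fintype B] (F : A → A → B → B → ℝ) :
    (∑ σ : A, ∑ τ : A, ∑ α : B, ∑ β : B, F σ τ α β)
      = ∑ τ : A, ∑ β : B, ∑ α : B, ∑ σ : A, F σ τ α β :=
  calc (∑ σ : A, ∑ τ : A, ∑ α : B, ∑ β : B, F σ τ α β)
      = ∑ τ : A, ∑ σ : A, ∑ α : B, ∑ β : B, F σ τ α β := Finset.sum_comm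
    _ = ∑ τ : A, ∑ α : B, ∑ σ : A, ∑ β : B, F σ τ α β :=
        Finset.sum_congr rfl fun τ _ => Finset.sum_comm
    _ = ∑ τ : A, ∑ α : B, ∑ β : B, ∑ σ : A, F σ τ α β :=
        Finset.sum_congr rfl fun τ _ => Finset.sum_congr rfl fun α _ => Finset.sum_comm
    _ = ∑ τ : A, ∑ β : B, ∑ α : B, ∑ σ : A, F σ τ α β :=
        Finset.sum_congr rfl fun τ _ => Finset.sum_comm

lemma powDF_eq (k : DF n 1 1) (p : ℕ) (x y : Fin p → EucV n) :
    powDF k p x y = ∑ σ : Equiv.Perm (Fin p), ∑ τ : Equiv.Perm (Fin p),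
      sgn σ * sgn τ * ∏ i : Fin p, k ![x (σ i)] ![y (τ i)] := by
  induction p with
  | zero =>
    simp [powDF, sgn]
  | succ p ih =>
    have hlast : (Fin.natAdd p (0 : Fin 1)) = Fin.last p := by
      ext
      simp
    have hcast : ∀ i : Fin p, Fin.castAdd 1 i = Fin.castSucc i := fun i => rfl
    have key : (∑ σ : Equiv.Perm (Fin (p + 1)), ∑ τ : Equiv.Perm (Fin (p + 1)),
          sgn σ * sgn τ *
            (powDF k p (fun i => x (σ (Fin.castAdd 1 i))) (fun j => y (τ (Fin.castAdd 1 j))) *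
              k (fun i => x (σ (Fin.natAdd p i))) (fun j => y (τ (Fin.natAdd p j)))))
        = (p.factorial : ℝ) * ((p.factorial : ℝ) *
            ∑ σ : Equiv.Perm (Fin (p + 1)), ∑ τ : Equiv.Perm (Fin (p + 1)),
              sgn σ * sgn τ * ∏ i : Fin (p + 1), k ![x (σ i)] ![y (τ i)]) := by
      have hterm : ∀ (σ τ : Equiv.Perm (Fin (p + 1))),
          sgn σ * sgn τ *
            (powDF k p (fun i => x (σ (Fin.castAdd 1 i))) (fun j => y (τ (Fin.castAdd 1 j))) *
              k (fun i => x (σ (Fin.natAdd p i))) (fun j => y (τ (Fin.natAdd p j))))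
          = ∑ α : Equiv.Perm (Fin p), ∑ β : Equiv.Perm (Fin p),
              sgn σ * sgn α * (sgn τ * sgn β *
                ((∏ i : Fin p, k ![x (σ (Fin.castAdd 1 (α i)))] ![y (τ (Fin.castAdd 1 (β i)))]) *
                  k ![x (σ (Fin.natAdd p 0))] ![y (τ (Fin.natAdd p 0))])) := by
        intro σ τ
        rw [ih, apply_fin1 k]
        rw [Finset.sum_mul, Finset.mul_sum]
        refine Finset.sum_congr rfl fun α _ => ?_
        rw [Finset.sum_mul, Finset.mul_sum]
        refine Finset.sum_congr rfl fun β _ => ?_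
        ring
      calc (∑ σ : Equiv.Perm (Fin (p + 1)), ∑ τ : Equiv.Perm (Fin (p + 1)),
            sgn σ * sgn τ *
              (powDF k p (fun i => x (σ (Fin.castAdd 1 i))) (fun j => y (τ (Fin.castAdd 1 j))) *
                k (fun i => x (σ (Fin.natAdd p i))) (fun j => y (τ (Fin.natAdd p j)))))
          = ∑ σ : Equiv.Perm (Fin (p + 1)), ∑ τ : Equiv.Perm (Fin (p + 1)),
              ∑ α : Equiv.Perm (Fin p), ∑ β : Equiv.Perm (Fin p),
                sgn σ * sgn α * (sgn τ * sgn β *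
                  ((∏ i : Fin p, k ![x (σ (Fin.castAdd 1 (α i)))] ![y (τ (Fin.castAdd 1 (β i)))]) *
                    k ![x (σ (Fin.natAdd p 0))] ![y (τ (Fin.natAdd p 0))])) :=
            Finset.sum_congr rfl fun σ _ => Finset.sum_congr rfl fun τ _ => hterm σ τ
        _ = ∑ τ : Equiv.Perm (Fin (p + 1)), ∑ β : Equiv.Perm (Fin p),
              ∑ α : Equiv.Perm (Fin p), ∑ σ : Equiv.Perm (Fin (p + 1)),
                sgn σ * sgn α * (sgn τ * sgn β *
                  ((∏ i : Fin p, k ![x (σ (Fin.castAdd 1 (α i)))] ![y (τ (Fin.castAdd 1 (β i)))]) *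
                    k ![x (σ (Fin.natAdd p 0))] ![y (τ (Fin.natAdd p 0))])) :=
            sum_perm4 _
        _ = ∑ τ : Equiv.Perm (Fin (p + 1)), ∑ β : Equiv.Perm (Fin p),
              (p.factorial : ℝ) * ∑ σ : Equiv.Perm (Fin (p + 1)),
                sgn σ * (sgn τ * sgn β *
                  ((∏ i : Fin p, k ![x (σ (Fin.castAdd 1 i))] ![y (τ (Fin.castAdd 1 (β i)))]) *
                    k ![x (σ (Fin.natAdd p 0))] ![y (τ (Fin.natAdd p 0))])) :=
            Finset.sum_congr rfl fun τ _ => Finset.sum_congr rfl fun β _ =>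
              collapseL p 1 (fun u v => sgn τ * sgn β *
                ((∏ i : Fin p, k ![x (u i)] ![y (τ (Fin.castAdd 1 (β i)))]) *
                  k ![x (v 0)] ![y (τ (Fin.natAdd p 0))]))
        _ = (p.factorial : ℝ) * ∑ τ : Equiv.Perm (Fin (p + 1)), ∑ β : Equiv.Perm (Fin p),
              ∑ σ : Equiv.Perm (Fin (p + 1)),
                sgn σ * (sgn τ * sgn β *
                  ((∏ i : Fin p, k ![x (σ (Fin.castAdd 1 i))] ![y (τ (Fin.castAdd 1 (β i)))]) *
                    k ![x (σ (Fin.natAdd p 0))] ![y (τ (Fin.natAdd p 0))])) := by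
            rw [Finset.mul_sum]
            refine Finset.sum_congr rfl fun τ _ => ?_
            rw [Finset.mul_sum]
        _ = (p.factorial : ℝ) * ∑ β : Equiv.Perm (Fin p), ∑ τ : Equiv.Perm (Fin (p + 1)),
              sgn τ * sgn β *
                ∑ σ : Equiv.Perm (Fin (p + 1)),
                  sgn σ *
                    ((∏ i : Fin p, k ![x (σ (Fin.castAdd 1 i))] ![y (τ (Fin.castAdd 1 (β i)))]) *
                      k ![x (σ (Fin.natAdd p 0))] ![y (τ (Fin.natAdd p 0))]) := by
            congr 1
            rw [Finset.sum_comm]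
            refine Finset.sum_congr rfl fun β _ => Finset.sum_congr rfl fun τ _ => ?_
            rw [Finset.mul_sum]
            refine Finset.sum_congr rfl fun σ _ => ?_
            ring
        _ = (p.factorial : ℝ) * ((p.factorial : ℝ) * ∑ τ : Equiv.Perm (Fin (p + 1)),
              sgn τ *
                ∑ σ : Equiv.Perm (Fin (p + 1)),
                  sgn σ *
                    ((∏ i : Fin p, k ![x (σ (Fin.castAdd 1 i))] ![y (τ (Fin.castAdd 1 i))]) *
                      k ![x (σ (Fin.natAdd p 0))] ![y (τ (Fin.natAdd p 0))])) := by
            congr 1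
            exact collapseL p 1 (fun u v =>
              ∑ σ : Equiv.Perm (Fin (p + 1)),
                sgn σ *
                  ((∏ i : Fin p, k ![x (σ (Fin.castAdd 1 i))] ![y (u i)]) *
                    k ![x (σ (Fin.natAdd p 0))] ![y (v 0)]))
        _ = (p.factorial : ℝ) * ((p.factorial : ℝ) *
              ∑ σ : Equiv.Perm (Fin (p + 1)), ∑ τ : Equiv.Perm (Fin (p + 1)),
                sgn σ * sgn τ * ∏ i : Fin (p + 1), k ![x (σ i)] ![y (τ i)]) := by
            congr 1
            congr 1
            rw [Finset.sum_comm]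
            refine Finset.sum_congr rfl fun τ _ => ?_
            rw [Finset.mul_sum]
            refine Finset.sum_congr rfl fun σ _ => ?_
            rw [Fin.prod_univ_castSucc (f := fun i => k ![x (σ i)] ![y (τ i)]), ← hlast]
            simp only [hcast]
            ring
    rw [show powDF k (p + 1) = extMul (powDF k p) k from rfl]
    simp only [extMul]
    rw [key]
    have h0 : (p.factorial : ℝ) ≠ 0 := Nat.cast_ne_zero.mpr p.factorial_ne_zero
    rw [Nat.factorial_one]
    push_cast
    field_simp

end PartB
section PartC
open Equiv Finset

variable {n : ℕ}

lemma extMul_h_pow (h k : DF n 1 1) (m : ℕ) (x y : Fin (1 + m) → EucV n) :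
    extMul h (powDF k m) x y
      = ∑ σ : Equiv.Perm (Fin (1 + m)), ∑ τ : Equiv.Perm (Fin (1 + m)),
          sgn σ * sgn τ *
            (h ![x (σ (Fin.castAdd m 0))] ![y (τ (Fin.castAdd m 0))] *
              ∏ j : Fin m, k ![x (σ (Fin.natAdd 1 j))] ![y (τ (Fin.natAdd 1 j))]) := by
  have key : (∑ σ : Equiv.Perm (Fin (1 + m)), ∑ τ : Equiv.Perm (Fin (1 + m)),
        sgn σ * sgn τ *
          (h (fun i => x (σ (Fin.castAdd m i))) (fun j => y (τ (Fin.castAdd m j))) *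
            powDF k m (fun i => x (σ (Fin.natAdd 1 i))) (fun j => y (τ (Fin.natAdd 1 j)))))
      = (m.factorial : ℝ) * ((m.factorial : ℝ) *
          ∑ σ : Equiv.Perm (Fin (1 + m)), ∑ τ : Equiv.Perm (Fin (1 + m)),
            sgn σ * sgn τ *
              (h ![x (σ (Fin.castAdd m 0))] ![y (τ (Fin.castAdd m 0))] *
                ∏ j : Fin m, k ![x (σ (Fin.natAdd 1 j))] ![y (τ (Fin.natAdd 1 j))])) := by
    have hterm : ∀ (σ τ : Equiv.Perm (Fin (1 + m))),
        sgn σ * sgn τ *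
          (h (fun i => x (σ (Fin.castAdd m i))) (fun j => y (τ (Fin.castAdd m j))) *
            powDF k m (fun i => x (σ (Fin.natAdd 1 i))) (fun j => y (τ (Fin.natAdd 1 j))))
        = ∑ α : Equiv.Perm (Fin m), ∑ β : Equiv.Perm (Fin m),
            sgn σ * sgn α * (sgn τ * sgn β *
              (h ![x (σ (Fin.castAdd m 0))] ![y (τ (Fin.castAdd m 0))] *
                ∏ j : Fin m, k ![x (σ (Fin.natAdd 1 (α j)))] ![y (τ (Fin.natAdd 1 (β j)))])) := by
      intro σ τ
      rw [powDF_eq, apply_fin1 h]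
      simp only [Finset.mul_sum]
      refine Finset.sum_congr rfl fun α _ => Finset.sum_congr rfl fun β _ => ?_
      ring
    calc (∑ σ : Equiv.Perm (Fin (1 + m)), ∑ τ : Equiv.Perm (Fin (1 + m)),
          sgn σ * sgn τ *
            (h (fun i => x (σ (Fin.castAdd m i))) (fun j => y (τ (Fin.castAdd m j))) *
              powDF k m (fun i => x (σ (Fin.natAdd 1 i))) (fun j => y (τ (Fin.natAdd 1 j)))))
        = ∑ σ : Equiv.Perm (Fin (1 + m)), ∑ τ : Equiv.Perm (Fin (1 + m)),
            ∑ α : Equiv.Perm (Fin m), ∑ β : Equiv.Perm (Fin m),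
              sgn σ * sgn α * (sgn τ * sgn β *
                (h ![x (σ (Fin.castAdd m 0))] ![y (τ (Fin.castAdd m 0))] *
                  ∏ j : Fin m, k ![x (σ (Fin.natAdd 1 (α j)))] ![y (τ (Fin.natAdd 1 (β j)))])) :=
          Finset.sum_congr rfl fun σ _ => Finset.sum_congr rfl fun τ _ => hterm σ τ
      _ = ∑ τ : Equiv.Perm (Fin (1 + m)), ∑ β : Equiv.Perm (Fin m),
            ∑ α : Equiv.Perm (Fin m), ∑ σ : Equiv.Perm (Fin (1 + m)),
              sgn σ * sgn α * (sgn τ * sgn β *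
                (h ![x (σ (Fin.castAdd m 0))] ![y (τ (Fin.castAdd m 0))] *
                  ∏ j : Fin m, k ![x (σ (Fin.natAdd 1 (α j)))] ![y (τ (Fin.natAdd 1 (β j)))])) :=
          sum_perm4 _
      _ = ∑ τ : Equiv.Perm (Fin (1 + m)), ∑ β : Equiv.Perm (Fin m),
            (m.factorial : ℝ) * ∑ σ : Equiv.Perm (Fin (1 + m)),
              sgn σ * (sgn τ * sgn β *
                (h ![x (σ (Fin.castAdd m 0))] ![y (τ (Fin.castAdd m 0))] *
                  ∏ j : Fin m, k ![x (σ (Fin.natAdd 1 j))] ![y (τ (Fin.natAdd 1 (β j)))])) :=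
          Finset.sum_congr rfl fun τ _ => Finset.sum_congr rfl fun β _ =>
            collapseR 1 m (fun u v => sgn τ * sgn β *
              (h ![x (u 0)] ![y (τ (Fin.castAdd m 0))] *
                ∏ j : Fin m, k ![x (v j)] ![y (τ (Fin.natAdd 1 (β j)))]))
      _ = (m.factorial : ℝ) * ∑ τ : Equiv.Perm (Fin (1 + m)), ∑ β : Equiv.Perm (Fin m),
            ∑ σ : Equiv.Perm (Fin (1 + m)),
              sgn σ * (sgn τ * sgn β *
                (h ![x (σ (Fin.castAdd m 0))] ![y (τ (Fin.castAdd m 0))] *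
                  ∏ j : Fin m, k ![x (σ (Fin.natAdd 1 j))] ![y (τ (Fin.natAdd 1 (β j)))])) := by
          rw [Finset.mul_sum]
          refine Finset.sum_congr rfl fun τ _ => ?_
          rw [Finset.mul_sum]
      _ = (m.factorial : ℝ) * ∑ β : Equiv.Perm (Fin m), ∑ τ : Equiv.Perm (Fin (1 + m)),
            sgn τ * sgn β *
              ∑ σ : Equiv.Perm (Fin (1 + m)),
                sgn σ *
                  (h ![x (σ (Fin.castAdd m 0))] ![y (τ (Fin.castAdd m 0))] *
                    ∏ j : Fin m, k ![x (σ (Fin.natAdd 1 j))] ![y (τ (Fin.natAdd 1 (β j)))]) := by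
          congr 1
          rw [Finset.sum_comm]
          refine Finset.sum_congr rfl fun β _ => Finset.sum_congr rfl fun τ _ => ?_
          rw [Finset.mul_sum]
          refine Finset.sum_congr rfl fun σ _ => ?_
          ring
      _ = (m.factorial : ℝ) * ((m.factorial : ℝ) * ∑ τ : Equiv.Perm (Fin (1 + m)),
            sgn τ *
              ∑ σ : Equiv.Perm (Fin (1 + m)),
                sgn σ *
                  (h ![x (σ (Fin.castAdd m 0))] ![y (τ (Fin.castAdd m 0))] *
                    ∏ j : Fin m, k ![x (σ (Fin.natAdd 1 j))] ![y (τ (Fin.natAdd 1 j))])) := by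
          congr 1
          exact collapseR 1 m (fun u v =>
            ∑ σ : Equiv.Perm (Fin (1 + m)),
              sgn σ *
                (h ![x (σ (Fin.castAdd m 0))] ![y (u 0)] *
                  ∏ j : Fin m, k ![x (σ (Fin.natAdd 1 j))] ![y (v j)]))
      _ = (m.factorial : ℝ) * ((m.factorial : ℝ) *
            ∑ σ : Equiv.Perm (Fin (1 + m)), ∑ τ : Equiv.Perm (Fin (1 + m)),
              sgn σ * sgn τ *
                (h ![x (σ (Fin.castAdd m 0))] ![y (τ (Fin.castAdd m 0))] *
                  ∏ j : Fin m, k ![x (σ (Fin.natAdd 1 j))] ![y (τ (Fin.natAdd 1 j))])) := by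
          congr 1
          congr 1
          rw [Finset.sum_comm]
          refine Finset.sum_congr rfl fun τ _ => ?_
          rw [Finset.mul_sum]
          refine Finset.sum_congr rfl fun σ _ => ?_
          ring
  simp only [extMul]
  rw [key]
  have h0 : (m.factorial : ℝ) ≠ 0 := Nat.cast_ne_zero.mpr m.factorial_ne_zero
  rw [Nat.factorial_one]
  push_cast
  field_simp

lemma detForm (k : DF n 1 1) (p : ℕ) (u v : Fin p → EucV n) :
    (∑ σ : Equiv.Perm (Fin p), ∑ τ : Equiv.Perm (Fin p),
        sgn σ * sgn τ * ∏ c : Fin p, k ![u (σ c)] ![v (τ c)])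
      = (p.factorial : ℝ) * Matrix.det (Matrix.of fun a b : Fin p => k ![u a] ![v b]) := by
  set M : Matrix (Fin p) (Fin p) ℝ := Matrix.of fun a b : Fin p => k ![u a] ![v b] with hM
  have hinner : ∀ τ : Equiv.Perm (Fin p),
      (∑ σ : Equiv.Perm (Fin p), sgn σ * sgn τ * ∏ c : Fin p, k ![u (σ c)] ![v (τ c)])
        = M.det := by
    intro τ
    rw [Matrix.det_apply']
    refine (Fintype.sum_equiv (Equiv.mulRight τ)
      (fun π => ((Equiv.Perm.sign π : ℤ) : ℝ) * ∏ c : Fin p, M (π c) c) _ ?_).symm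
    intro π
    have hs : sgn (π * τ) * sgn τ = sgn π := by
      rw [sgn_mul, mul_assoc, sgn_sq, mul_one]
    have hp : (∏ c : Fin p, M (π c) c) = ∏ c : Fin p, k ![u ((π * τ) c)] ![v (τ c)] := by
      rw [← Equiv.prod_comp τ (fun c => M (π c) c)]
      rfl
    simp only [Equiv.coe_mulRight]
    rw [show ((Equiv.Perm.sign π : ℤ) : ℝ) = sgn π from rfl, ← hs, hp]
  rw [Finset.sum_comm, Finset.sum_congr rfl fun τ _ => hinner τ, Finset.sum_const,
    Finset.card_univ, Fintype.card_perm, Fintype.card_fin, nsmul_eq_mul]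

end PartC
section PartD
open Equiv Finset

lemma succAbove_succ_zero {N : ℕ} (a : Fin (N + 1)) : (a.succ).succAbove 0 = 0 := by
  rw [Fin.succAbove_of_castSucc_lt _ _ (by simp [Fin.lt_def]), Fin.castSucc_zero]

lemma fiber0 {N : ℕ} (M : Matrix (Fin (N + 1)) (Fin (N + 1)) ℝ) :
    (∑ π ∈ Finset.univ.filter (fun π : Equiv.Perm (Fin (N + 1)) => π 0 = 0),
        sgn π * ∏ c : Fin (N + 1), M (π c) c)
      = M 0 0 * (M.submatrix Fin.succ Fin.succ).det := by
  set C : Matrix (Fin (N + 1)) (Fin (N + 1)) ℝ :=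
    Matrix.of fun i c => if c = 0 then (if i = 0 then M 0 0 else 0) else M i c with hC
  have h1 : (∑ π ∈ Finset.univ.filter (fun π : Equiv.Perm (Fin (N + 1)) => π 0 = 0),
      sgn π * ∏ c : Fin (N + 1), M (π c) c) = C.det := by
    rw [Matrix.det_apply']
    rw [← Finset.sum_filter_add_sum_filter_not Finset.univ
      (fun π : Equiv.Perm (Fin (N + 1)) => π 0 = 0)
      (fun π => ((Equiv.Perm.sign π : ℤ) : ℝ) * ∏ c : Fin (N + 1), C (π c) c)]
    have h2 : (∑ π ∈ Finset.univ.filter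
        (fun π : Equiv.Perm (Fin (N + 1)) => ¬ π 0 = 0),
        ((Equiv.Perm.sign π : ℤ) : ℝ) * ∏ c : Fin (N + 1), C (π c) c) = 0 := by
      refine Finset.sum_eq_zero fun π hπ => ?_
      have hπ0 : ¬ π 0 = 0 := (Finset.mem_filter.mp hπ).2
      refine mul_eq_zero_of_right _
        (Finset.prod_eq_zero (Finset.mem_univ (0 : Fin (N + 1)))
          (f := fun c => C (π c) c) ?_)
      simp [hC, hπ0]
    rw [h2, add_zero]
    refine Finset.sum_congr rfl fun π hπ => ?_
    have hπ0 : π 0 = 0 := (Finset.mem_filter.mp hπ).2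
    congr 1
    refine Finset.prod_congr rfl fun c _ => ?_
    by_cases hc : c = 0
    · subst hc
      simp [hC, hπ0]
    · simp [hC, hc]
  rw [h1, Matrix.det_succ_column_zero]
  rw [Finset.sum_eq_single_of_mem (0 : Fin (N + 1)) (Finset.mem_univ _) (fun i _ hi => by
    refine mul_eq_zero_of_left (mul_eq_zero_of_right _ ?_) _
    simp [hC, hi])]
  have hsub : C.submatrix (0 : Fin (N + 1)).succAbove Fin.succ
      = M.submatrix Fin.succ Fin.succ := by
    ext i j
    simp [hC, Fin.succAbove_zero, Fin.succ_ne_zero]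
  rw [hsub]
  simp [hC]

lemma fiberTS {N : ℕ} (M : Matrix (Fin (N + 2)) (Fin (N + 2)) ℝ) (a b : Fin (N + 1)) :
    (∑ π ∈ Finset.univ.filter
        (fun π : Equiv.Perm (Fin (N + 2)) => π 0 = b.succ ∧ π a.succ = 0),
        sgn π * ∏ c : Fin (N + 2), M (π c) c)
      = M b.succ 0 * M 0 a.succ * (-(-1 : ℝ) ^ ((a : ℕ) + (b : ℕ))) *
          ((M.submatrix Fin.succ Fin.succ).submatrix b.succAbove a.succAbove).det := by
  set C : Matrix (Fin (N + 2)) (Fin (N + 2)) ℝ :=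
    Matrix.of fun i c =>
      if c = 0 then (if i = b.succ then M b.succ 0 else 0)
      else if c = a.succ then (if i = 0 then M 0 a.succ else 0)
      else M i c with hC
  have h1 : (∑ π ∈ Finset.univ.filter
      (fun π : Equiv.Perm (Fin (N + 2)) => π 0 = b.succ ∧ π a.succ = 0),
      sgn π * ∏ c : Fin (N + 2), M (π c) c) = C.det := by
    rw [Matrix.det_apply']
    rw [← Finset.sum_filter_add_sum_filter_not Finset.univ
      (fun π : Equiv.Perm (Fin (N + 2)) => π 0 = b.succ ∧ π a.succ = 0)
      (fun π => ((Equiv.Perm.sign π : ℤ) : ℝ) * ∏ c : Fin (N + 2), C (π c) c)]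
    have h2 : (∑ π ∈ Finset.univ.filter
        (fun π : Equiv.Perm (Fin (N + 2)) => ¬ (π 0 = b.succ ∧ π a.succ = 0)),
        ((Equiv.Perm.sign π : ℤ) : ℝ) * ∏ c : Fin (N + 2), C (π c) c) = 0 := by
      refine Finset.sum_eq_zero fun π hπ => ?_
      have hπ0 : ¬ (π 0 = b.succ ∧ π a.succ = 0) := (Finset.mem_filter.mp hπ).2
      by_cases hb : π 0 = b.succ
      · have ha : ¬ π a.succ = 0 := fun h => hπ0 ⟨hb, h⟩
        refine mul_eq_zero_of_right _
          (Finset.prod_eq_zero (Finset.mem_univ (a.succ : Fin (N + 2)))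
            (f := fun c => C (π c) c) ?_)
        simp [hC, ha, Fin.succ_ne_zero]
      · refine mul_eq_zero_of_right _
          (Finset.prod_eq_zero (Finset.mem_univ (0 : Fin (N + 2)))
            (f := fun c => C (π c) c) ?_)
        simp [hC, hb]
    rw [h2, add_zero]
    refine Finset.sum_congr rfl fun π hπ => ?_
    obtain ⟨hb, ha⟩ := (Finset.mem_filter.mp hπ).2
    congr 1
    refine Finset.prod_congr rfl fun c _ => ?_
    by_cases hc : c = 0
    · subst hc
      simp [hC, hb]
    · by_cases hc' : c = a.succ
      · subst hc'
        simp [hC, ha, Fin.succ_ne_zero]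
      · simp [hC, hc, hc']
  rw [h1, Matrix.det_succ_column C a.succ]
  rw [Finset.sum_eq_single_of_mem (0 : Fin (N + 2)) (Finset.mem_univ _) (fun i _ hi => by
    refine mul_eq_zero_of_left (mul_eq_zero_of_right _ ?_) _
    simp [hC, hi, Fin.succ_ne_zero])]
  have hD : ∀ (i' : Fin (N + 1)) (j' : Fin (N + 1)),
      (C.submatrix (0 : Fin (N + 2)).succAbove (a.succ).succAbove) i' j'
        = C (i'.succ) ((a.succ).succAbove j') := by
    intro i' j'
    simp [Fin.succAbove_zero]
  rw [Matrix.det_succ_column_zero (C.submatrix (0 : Fin (N + 2)).succAbove (a.succ).succAbove)]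
  rw [Finset.sum_eq_single_of_mem b (Finset.mem_univ _) (fun i _ hi => by
    refine mul_eq_zero_of_left (mul_eq_zero_of_right _ ?_) _
    rw [hD i 0, succAbove_succ_zero]
    have h' : i.succ ≠ b.succ := fun h => hi (Fin.succ_injective _ h)
    simp [hC, h'])]
  have hE : ((C.submatrix (0 : Fin (N + 2)).succAbove (a.succ).succAbove).submatrix
      b.succAbove Fin.succ)
      = ((M.submatrix Fin.succ Fin.succ).submatrix b.succAbove a.succAbove) := by
    ext r j
    simp only [Matrix.submatrix_apply, Fin.succAbove_zero]
    rw [Fin.succ_succAbove_succ]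
    have h1' : (a.succAbove j).succ ≠ 0 := Fin.succ_ne_zero _
    have h2' : (a.succAbove j).succ ≠ a.succ := by
      intro h
      exact Fin.succAbove_ne a j (Fin.succ_injective _ h)
    simp [hC, h1', h2']
  rw [hE]
  have hC1 : (C.submatrix (0 : Fin (N + 2)).succAbove (a.succ).succAbove) b 0
      = M b.succ 0 := by
    rw [hD b 0, succAbove_succ_zero]
    simp [hC]
  rw [hC1]
  have hC2 : C 0 a.succ = M 0 a.succ := by simp [hC, Fin.succ_ne_zero]
  rw [hC2]
  have hz : ((0 : Fin (N + 2)) : ℕ) = 0 := rfl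
  rw [hz, Fin.val_succ]
  ring_nf

end PartD
section PartE
open Equiv Finset

lemma fiber_card {N : ℕ} (b : Fin (N + 1)) :
    (Finset.univ.filter (fun τ : Equiv.Perm (Fin (N + 1)) => τ 0 = b)).card
      = N.factorial := by
  have himg : Finset.univ.filter (fun τ : Equiv.Perm (Fin (N + 1)) => τ 0 = b)
      = Finset.image (fun e : Equiv.Perm (Fin N) => Equiv.Perm.decomposeFin.symm (b, e))
          Finset.univ := by
    ext τ
    simp only [Finset.mem_filter, Finset.mem_univ, true_and, Finset.mem_image]
    constructor
    · intro h
      refine ⟨(Equiv.Perm.decomposeFin τ).2, ?_⟩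
      have hfst : (Equiv.Perm.decomposeFin τ).1 = τ 0 := by
        conv_rhs => rw [← Equiv.symm_apply_apply Equiv.Perm.decomposeFin τ,
          show Equiv.Perm.decomposeFin τ
            = ((Equiv.Perm.decomposeFin τ).1, (Equiv.Perm.decomposeFin τ).2) from rfl,
          Equiv.Perm.decomposeFin_symm_apply_zero]
      rw [← h, ← hfst]
      exact Equiv.symm_apply_apply _ _
    · rintro ⟨e, rfl⟩
      exact Equiv.Perm.decomposeFin_symm_apply_zero b e
  rw [himg, Finset.card_image_of_injective _ (fun e₁ e₂ h => by
    have := Equiv.Perm.decomposeFin.symm.injective h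
    exact (Prod.mk.injEq _ _ _ _).mp this |>.2)]
  rw [Finset.card_univ, Fintype.card_perm, Fintype.card_fin]

lemma innerS {N : ℕ} (B : Matrix (Fin (N + 1)) (Fin (N + 1)) ℝ)
    (H : Fin (N + 1) → Fin (N + 1) → ℝ) :
    (∑ σ : Equiv.Perm (Fin (N + 1)), ∑ τ : Equiv.Perm (Fin (N + 1)),
        sgn σ * sgn τ * (H (σ 0) (τ 0) * ∏ j : Fin N, B (σ j.succ) (τ j.succ)))
      = (N.factorial : ℝ) * ∑ a : Fin (N + 1), ∑ b : Fin (N + 1),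
          H a b * ((-1 : ℝ) ^ ((a : ℕ) + (b : ℕ)) * (B.submatrix a.succAbove b.succAbove).det) := by
  have hdd : ∀ a b : Fin (N + 1),
      (B.updateCol b (Pi.single a 1)).det
        = (-1 : ℝ) ^ ((a : ℕ) + (b : ℕ)) * (B.submatrix a.succAbove b.succAbove).det := by
    intro a b
    rw [Matrix.det_succ_column _ b]
    rw [Finset.sum_eq_single_of_mem a (Finset.mem_univ _) (fun i _ hi => by
      refine mul_eq_zero_of_left (mul_eq_zero_of_right _ ?_) _
      simp [Matrix.updateCol_apply, Pi.single_apply, hi])]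
    have hsub : (B.updateCol b (Pi.single a 1)).submatrix a.succAbove b.succAbove
        = B.submatrix a.succAbove b.succAbove := by
      ext r j
      simp [Matrix.updateCol_apply, Fin.succAbove_ne]
    rw [hsub]
    simp [Matrix.updateCol_apply]
  have hQ : ∀ (a b : Fin (N + 1)) (τ : Equiv.Perm (Fin (N + 1))), τ 0 = b →
      (∑ σ ∈ Finset.univ.filter (fun σ : Equiv.Perm (Fin (N + 1)) => σ 0 = a),
          sgn σ * ∏ j : Fin N, B (σ j.succ) (τ j.succ))
        = sgn τ * (B.updateCol b (Pi.single a 1)).det := by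
    intro a b τ hτ0
    set Q : Matrix (Fin (N + 1)) (Fin (N + 1)) ℝ :=
      Matrix.of fun i c => if c = 0 then (if i = a then (1 : ℝ) else 0) else B i (τ c) with hQdef
    have h1 : (∑ σ ∈ Finset.univ.filter (fun σ : Equiv.Perm (Fin (N + 1)) => σ 0 = a),
        sgn σ * ∏ j : Fin N, B (σ j.succ) (τ j.succ)) = Q.det := by
      rw [Matrix.det_apply']
      rw [← Finset.sum_filter_add_sum_filter_not Finset.univ
        (fun σ : Equiv.Perm (Fin (N + 1)) => σ 0 = a)
        (fun σ => ((Equiv.Perm.sign σ : ℤ) : ℝ) * ∏ c : Fin (N + 1), Q (σ c) c)]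
      have h2 : (∑ σ ∈ Finset.univ.filter
          (fun σ : Equiv.Perm (Fin (N + 1)) => ¬ σ 0 = a),
          ((Equiv.Perm.sign σ : ℤ) : ℝ) * ∏ c : Fin (N + 1), Q (σ c) c) = 0 := by
        refine Finset.sum_eq_zero fun σ hσ => ?_
        have hσ0 : ¬ σ 0 = a := (Finset.mem_filter.mp hσ).2
        refine mul_eq_zero_of_right _
          (Finset.prod_eq_zero (Finset.mem_univ (0 : Fin (N + 1)))
            (f := fun c => Q (σ c) c) ?_)
        simp [hQdef, hσ0]
      rw [h2, add_zero]
      refine Finset.sum_congr rfl fun σ hσ => ?_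
      have hσ0 : σ 0 = a := (Finset.mem_filter.mp hσ).2
      have hp : (∏ c : Fin (N + 1), Q (σ c) c)
          = ∏ j : Fin N, B (σ j.succ) (τ j.succ) := by
        rw [Fin.prod_univ_succ (f := fun c => Q (σ c) c)]
        have : Q (σ 0) 0 = 1 := by simp [hQdef, hσ0]
        rw [this, one_mul]
        refine Finset.prod_congr rfl fun j _ => ?_
        simp [hQdef, Fin.succ_ne_zero]
      rw [hp]
      rfl
    have h2 : Q = (B.updateCol b (Pi.single a 1)).submatrix id ⇑τ := by
      ext i c
      have hcb : (τ c = b) ↔ (c = 0) := by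
        rw [← hτ0]
        exact Equiv.apply_eq_iff_eq τ
      simp only [Matrix.submatrix_apply, Matrix.updateCol_apply, id_eq]
      by_cases hc : c = 0
      · subst hc
        simp [hQdef, hτ0, Pi.single_apply]
      · have : ¬ τ c = b := fun h => hc (hcb.mp h)
        simp [hQdef, hc, this]
    rw [h1, h2, Matrix.det_permute' τ]
    rfl
  have hfib : ∀ a b : Fin (N + 1),
      (∑ σ ∈ Finset.univ.filter (fun σ : Equiv.Perm (Fin (N + 1)) => σ 0 = a),
        ∑ τ ∈ Finset.univ.filter (fun τ : Equiv.Perm (Fin (N + 1)) => τ 0 = b),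
          sgn σ * sgn τ * (H (σ 0) (τ 0) * ∏ j : Fin N, B (σ j.succ) (τ j.succ)))
      = (N.factorial : ℝ) *
          (H a b * ((-1 : ℝ) ^ ((a : ℕ) + (b : ℕ)) * (B.submatrix a.succAbove b.succAbove).det)) := by
    intro a b
    rw [Finset.sum_comm]
    have hper : ∀ τ ∈ Finset.univ.filter (fun τ : Equiv.Perm (Fin (N + 1)) => τ 0 = b),
        (∑ σ ∈ Finset.univ.filter (fun σ : Equiv.Perm (Fin (N + 1)) => σ 0 = a),
          sgn σ * sgn τ * (H (σ 0) (τ 0) * ∏ j : Fin N, B (σ j.succ) (τ j.succ)))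
        = H a b * ((B.updateCol b (Pi.single a 1)).det) := by
      intro τ hτ
      have hτ0 : τ 0 = b := (Finset.mem_filter.mp hτ).2
      have step : (∑ σ ∈ Finset.univ.filter (fun σ : Equiv.Perm (Fin (N + 1)) => σ 0 = a),
          sgn σ * sgn τ * (H (σ 0) (τ 0) * ∏ j : Fin N, B (σ j.succ) (τ j.succ)))
          = (H a b * sgn τ) * ∑ σ ∈ Finset.univ.filter
              (fun σ : Equiv.Perm (Fin (N + 1)) => σ 0 = a),
              sgn σ * ∏ j : Fin N, B (σ j.succ) (τ j.succ) := by
        rw [Finset.mul_sum]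
        refine Finset.sum_congr rfl fun σ hσ => ?_
        have hσ0 : σ 0 = a := (Finset.mem_filter.mp hσ).2
        rw [hσ0, hτ0]
        ring
      rw [step, hQ a b τ hτ0]
      rw [show H a b * sgn τ * (sgn τ * (B.updateCol b (Pi.single a 1)).det)
          = (sgn τ * sgn τ) * (H a b * (B.updateCol b (Pi.single a 1)).det) from by ring]
      rw [sgn_sq, one_mul]
    rw [Finset.sum_congr rfl hper, Finset.sum_const, nsmul_eq_mul, fiber_card b, hdd a b]
  calc (∑ σ : Equiv.Perm (Fin (N + 1)), ∑ τ : Equiv.Perm (Fin (N + 1)),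
        sgn σ * sgn τ * (H (σ 0) (τ 0) * ∏ j : Fin N, B (σ j.succ) (τ j.succ)))
      = ∑ a : Fin (N + 1), ∑ σ ∈ Finset.univ.filter
          (fun σ : Equiv.Perm (Fin (N + 1)) => σ 0 = a),
          ∑ τ : Equiv.Perm (Fin (N + 1)),
            sgn σ * sgn τ * (H (σ 0) (τ 0) * ∏ j : Fin N, B (σ j.succ) (τ j.succ)) :=
        (Finset.sum_fiberwise Finset.univ (fun σ : Equiv.Perm (Fin (N + 1)) => σ 0) _).symm
    _ = ∑ a : Fin (N + 1), ∑ σ ∈ Finset.univ.filter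
          (fun σ : Equiv.Perm (Fin (N + 1)) => σ 0 = a),
          ∑ b : Fin (N + 1), ∑ τ ∈ Finset.univ.filter
            (fun τ : Equiv.Perm (Fin (N + 1)) => τ 0 = b),
            sgn σ * sgn τ * (H (σ 0) (τ 0) * ∏ j : Fin N, B (σ j.succ) (τ j.succ)) :=
        Finset.sum_congr rfl fun a _ => Finset.sum_congr rfl fun σ _ =>
          (Finset.sum_fiberwise Finset.univ (fun τ : Equiv.Perm (Fin (N + 1)) => τ 0) _).symm
    _ = ∑ a : Fin (N + 1), ∑ b : Fin (N + 1), ∑ σ ∈ Finset.univ.filter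
          (fun σ : Equiv.Perm (Fin (N + 1)) => σ 0 = a),
          ∑ τ ∈ Finset.univ.filter
            (fun τ : Equiv.Perm (Fin (N + 1)) => τ 0 = b),
            sgn σ * sgn τ * (H (σ 0) (τ 0) * ∏ j : Fin N, B (σ j.succ) (τ j.succ)) :=
        Finset.sum_congr rfl fun a _ => Finset.sum_comm
    _ = ∑ a : Fin (N + 1), ∑ b : Fin (N + 1), (N.factorial : ℝ) *
          (H a b * ((-1 : ℝ) ^ ((a : ℕ) + (b : ℕ)) * (B.submatrix a.succAbove b.succAbove).det)) :=
        Finset.sum_congr rfl fun a _ => Finset.sum_congr rfl fun b _ => hfib a b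
    _ = (N.factorial : ℝ) * ∑ a : Fin (N + 1), ∑ b : Fin (N + 1),
          H a b * ((-1 : ℝ) ^ ((a : ℕ) + (b : ℕ)) * (B.submatrix a.succAbove b.succAbove).det) := by
        rw [Finset.mul_sum]
        refine Finset.sum_congr rfl fun a _ => ?_
        rw [Finset.mul_sum]

end PartE
section PartF
open Equiv Finset

variable {n : ℕ}

lemma detExpand {N : ℕ} (M : Matrix (Fin (N + 2)) (Fin (N + 2)) ℝ) :
    M.det = M 0 0 * (M.submatrix Fin.succ Fin.succ).det
      + ∑ b : Fin (N + 1), ∑ a : Fin (N + 1),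
          M b.succ 0 * M 0 a.succ * (-(-1 : ℝ) ^ ((a : ℕ) + (b : ℕ))) *
            ((M.submatrix Fin.succ Fin.succ).submatrix b.succAbove a.succAbove).det := by
  rw [Matrix.det_apply']
  rw [← Finset.sum_fiberwise Finset.univ (fun π : Equiv.Perm (Fin (N + 2)) => π 0)
    (fun π => ((Equiv.Perm.sign π : ℤ) : ℝ) * ∏ c : Fin (N + 2), M (π c) c)]
  rw [Fin.sum_univ_succ]
  congr 1
  · exact fiber0 M
  refine Finset.sum_congr rfl fun b _ => ?_
  rw [← Finset.sum_fiberwise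
    (Finset.univ.filter (fun π : Equiv.Perm (Fin (N + 2)) => π 0 = b.succ))
    (fun π => π.symm 0)
    (fun π => ((Equiv.Perm.sign π : ℤ) : ℝ) * ∏ c : Fin (N + 2), M (π c) c)]
  rw [Fin.sum_univ_succ]
  have hzero : (∑ π ∈ (Finset.univ.filter
      (fun π : Equiv.Perm (Fin (N + 2)) => π 0 = b.succ)).filter
      (fun π => π.symm 0 = 0),
      ((Equiv.Perm.sign π : ℤ) : ℝ) * ∏ c : Fin (N + 2), M (π c) c) = 0 := by
    refine Finset.sum_eq_zero fun π hπ => ?_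
    have h1 := Finset.mem_filter.mp hπ
    have h2 := (Finset.mem_filter.mp h1.1).2
    have h3 : π 0 = 0 := by
      conv_lhs => rw [← h1.2]
      exact Equiv.apply_symm_apply _ _
    rw [h2] at h3
    exact absurd h3 (Fin.succ_ne_zero b)
  rw [hzero, zero_add]
  refine Finset.sum_congr rfl fun a _ => ?_
  have hfilter : (Finset.univ.filter
      (fun π : Equiv.Perm (Fin (N + 2)) => π 0 = b.succ)).filter
      (fun π => π.symm 0 = a.succ)
      = Finset.univ.filter
          (fun π : Equiv.Perm (Fin (N + 2)) => π 0 = b.succ ∧ π a.succ = 0) := by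
    rw [Finset.filter_filter]
    refine Finset.filter_congr fun π _ => ?_
    constructor
    · rintro ⟨h1, h2⟩
      refine ⟨h1, ?_⟩
      rw [← h2]
      exact Equiv.apply_symm_apply _ _
    · rintro ⟨h1, h2⟩
      refine ⟨h1, ?_⟩
      rw [← h2]
      exact Equiv.symm_apply_apply _ _
  rw [hfilter]
  exact fiberTS M a b

lemma trace_eq (k : DF n 1 1) :
    contractDF k Fin.elim0 Fin.elim0 = ∑ i : Fin n, k ![bv n i] ![bv n i] := by
  simp only [contractDF]
  refine Finset.sum_congr rfl fun i _ => ?_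
  rw [apply_fin1 k]
  simp

lemma Incr_one : Incr n 1 = Finset.univ := by
  rw [Incr, Finset.filter_true_of_mem]
  intro f _
  intro a b hab
  have ha := a.isLt
  have hb := b.isLt
  have := Fin.lt_def.mp hab
  omega

lemma compDF_eq (k : DF n 1 1) (u v : Fin 1 → EucV n) :
    compDF k k u v = ∑ i : Fin n, k u ![bv n i] * k ![bv n i] v := by
  simp only [compDF]
  rw [Incr_one]
  refine Fintype.sum_equiv (Equiv.funUnique (Fin 1) (Fin n)).symm _ _ (fun i => ?_) |>.symm
  have h1 : (fun j : Fin 1 => bv n (((Equiv.funUnique (Fin 1) (Fin n)).symm i) j))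
      = ![bv n i] := by
    funext j
    fin_cases j
    rfl
  rw [h1]

end PartF
section PartG
open Equiv Finset

variable {n : ℕ}

lemma cast_bridge (k : DF n 1 1) (m : ℕ) (h1 h2 : 1 + m = m + 1)
    (x y : Fin (m + 1) → EucV n) :
    castDF h1 h2 (extMul (compDF k k) (powDF k m)) x y
      = ∑ σ : Equiv.Perm (Fin (m + 1)), ∑ τ : Equiv.Perm (Fin (m + 1)),
          sgn σ * sgn τ *
            (compDF k k ![x (σ 0)] ![y (τ 0)] *
              ∏ j : Fin m, k ![x (σ j.succ)] ![y (τ j.succ)]) := by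
  simp only [castDF]
  rw [extMul_h_pow]
  have hE1 : ∀ (σ : Equiv.Perm (Fin (1 + m))) (z : Fin (1 + m)),
      (Equiv.permCongr (finCongr h1) σ) (Fin.cast h1 z) = Fin.cast h1 (σ z) := by
    intro σ z
    rw [Equiv.permCongr_apply]
    rw [show (finCongr h1).symm (Fin.cast h1 z) = z from Fin.val_injective rfl]
    exact Fin.val_injective rfl
  have hE2 : ∀ (τ : Equiv.Perm (Fin (1 + m))) (z : Fin (1 + m)),
      (Equiv.permCongr (finCongr h2) τ) (Fin.cast h2 z) = Fin.cast h2 (τ z) := by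
    intro τ z
    rw [Equiv.permCongr_apply]
    rw [show (finCongr h2).symm (Fin.cast h2 z) = z from Fin.val_injective rfl]
    exact Fin.val_injective rfl
  have hz1 : Fin.cast h1 (Fin.castAdd m (0 : Fin 1)) = (0 : Fin (m + 1)) := by
    ext
    simp
  have hz2 : Fin.cast h2 (Fin.castAdd m (0 : Fin 1)) = (0 : Fin (m + 1)) := by
    ext
    simp
  have hs1 : ∀ j : Fin m, Fin.cast h1 (Fin.natAdd 1 j) = j.succ := by
    intro j
    ext
    simp [Fin.val_succ, Nat.add_comm]
  have hs2 : ∀ j : Fin m, Fin.cast h2 (Fin.natAdd 1 j) = j.succ := by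
    intro j
    ext
    simp [Fin.val_succ, Nat.add_comm]
  have hsgn1 : ∀ σ : Equiv.Perm (Fin (1 + m)),
      sgn (Equiv.permCongr (finCongr h1) σ) = sgn σ := by
    intro σ
    simp [sgn, Equiv.Perm.sign_permCongr]
  have hsgn2 : ∀ τ : Equiv.Perm (Fin (1 + m)),
      sgn (Equiv.permCongr (finCongr h2) τ) = sgn τ := by
    intro τ
    simp [sgn, Equiv.Perm.sign_permCongr]
  refine Fintype.sum_equiv (Equiv.permCongr (finCongr h1)) _ _ (fun σ => ?_)
  refine Fintype.sum_equiv (Equiv.permCongr (finCongr h2)) _ _ (fun τ => ?_)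
  have ha : (Equiv.permCongr (finCongr h1) σ) 0 = Fin.cast h1 (σ (Fin.castAdd m 0)) := by
    rw [← hz1, hE1]
  have hb : (Equiv.permCongr (finCongr h2) τ) 0 = Fin.cast h2 (τ (Fin.castAdd m 0)) := by
    rw [← hz2, hE2]
  have hc : ∀ j : Fin m,
      (Equiv.permCongr (finCongr h1) σ) j.succ = Fin.cast h1 (σ (Fin.natAdd 1 j)) := by
    intro j
    rw [← hs1 j, hE1]
  have hd : ∀ j : Fin m,
      (Equiv.permCongr (finCongr h2) τ) j.succ = Fin.cast h2 (τ (Fin.natAdd 1 j)) := by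
    intro j
    rw [← hs2 j, hE2]
  rw [hsgn1 σ, hsgn2 τ]
  simp only [Function.comp_apply, ha, hb, hc, hd]

end PartG
set_option maxHeartbeats 1000000 in
/-- c(k^p) = p (c k) k^{p-1} − p(p-1) (k∘k) k^{p-2} for p ≥ 2
(here p = m+2). -/
theorem stmt17 (n m : ℕ) (k : DF n 1 1) :
    contractDF (powDF k (m + 2)) =
      (((m + 2 : ℕ) : ℝ) * contractDF k Fin.elim0 Fin.elim0) • powDF k (m + 1) -
        (((m + 2 : ℕ) : ℝ) * ((m + 1 : ℕ) : ℝ)) •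
          castDF (show 1 + m = m + 1 by omega) (show 1 + m = m + 1 by omega)
            (extMul (compDF k k) (powDF k m)) := by
  funext x y
  simp only [Pi.sub_apply, Pi.smul_apply, smul_eq_mul]
  have hL : contractDF (powDF k (m + 2)) x y
      = ((m + 2).factorial : ℝ) * ∑ i : Fin n,
          (Matrix.of fun a b : Fin (m + 2) =>
            k ![(Fin.cons (bv n i) x : Fin (m + 2) → EucV n) a] ![(Fin.cons (bv n i) y : Fin (m + 2) → EucV n) b]).det := by
    simp only [contractDF]
    rw [Finset.mul_sum]
    refine Finset.sum_congr rfl fun i _ => ?_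
    rw [powDF_eq, detForm]
  have hA : ∀ i : Fin n, (Matrix.of fun a b : Fin (m + 2) =>
        k ![(Fin.cons (bv n i) x : Fin (m + 2) → EucV n) a] ![(Fin.cons (bv n i) y : Fin (m + 2) → EucV n) b]).det
      = k ![bv n i] ![bv n i] * (Matrix.of fun a b : Fin (m + 1) => k ![x a] ![y b]).det
        + ∑ b : Fin (m + 1), ∑ a : Fin (m + 1),
            k ![x b] ![bv n i] * k ![bv n i] ![y a] * (-(-1 : ℝ) ^ ((a : ℕ) + (b : ℕ))) *
              ((Matrix.of fun a b : Fin (m + 1) => k ![x a] ![y b]).submatrix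
                b.succAbove a.succAbove).det := by
    intro i
    rw [detExpand]
    have hsub : (Matrix.of fun a b : Fin (m + 2) =>
        k ![(Fin.cons (bv n i) x : Fin (m + 2) → EucV n) a] ![(Fin.cons (bv n i) y : Fin (m + 2) → EucV n) b]).submatrix Fin.succ Fin.succ
        = Matrix.of fun a b : Fin (m + 1) => k ![x a] ![y b] := by
      ext a b
      simp [Fin.cons_succ]
    rw [hsub]
    congr 1
  have hLL : contractDF (powDF k (m + 2)) x y
      = ((m + 2).factorial : ℝ) *
          ((∑ i : Fin n, k ![bv n i] ![bv n i]) *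
              (Matrix.of fun a b : Fin (m + 1) => k ![x a] ![y b]).det
            + ∑ b : Fin (m + 1), ∑ a : Fin (m + 1),
                (∑ i : Fin n, k ![x b] ![bv n i] * k ![bv n i] ![y a]) *
                  (-(-1 : ℝ) ^ ((a : ℕ) + (b : ℕ))) *
                  ((Matrix.of fun a b : Fin (m + 1) => k ![x a] ![y b]).submatrix
                    b.succAbove a.succAbove).det) := by
    rw [hL, Finset.sum_congr rfl (fun i _ => hA i)]
    congr 1
    rw [Finset.sum_add_distrib]
    congr 1
    · rw [← Finset.sum_mul]
    · rw [Finset.sum_comm]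
      refine Finset.sum_congr rfl fun b _ => ?_
      rw [Finset.sum_comm]
      refine Finset.sum_congr rfl fun a _ => ?_
      rw [← Finset.sum_mul, ← Finset.sum_mul]
  have hR1 : powDF k (m + 1) x y
      = ((m + 1).factorial : ℝ) *
          (Matrix.of fun a b : Fin (m + 1) => k ![x a] ![y b]).det := by
    rw [powDF_eq, detForm]
  have hR2 : castDF (show 1 + m = m + 1 by omega) (show 1 + m = m + 1 by omega)
        (extMul (compDF k k) (powDF k m)) x y
      = (m.factorial : ℝ) * ∑ a : Fin (m + 1), ∑ b : Fin (m + 1),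
          (∑ i : Fin n, k ![x a] ![bv n i] * k ![bv n i] ![y b]) *
            ((-1 : ℝ) ^ ((a : ℕ) + (b : ℕ)) *
              ((Matrix.of fun a b : Fin (m + 1) => k ![x a] ![y b]).submatrix
                a.succAbove b.succAbove).det) := by
    rw [cast_bridge]
    have hconv : ∀ σ τ : Equiv.Perm (Fin (m + 1)),
        sgn σ * sgn τ *
          (compDF k k ![x (σ 0)] ![y (τ 0)] *
            ∏ j : Fin m, k ![x (σ j.succ)] ![y (τ j.succ)])
        = sgn σ * sgn τ *
            ((fun a b => ∑ i : Fin n, k ![x a] ![bv n i] * k ![bv n i] ![y b]) (σ 0) (τ 0) *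
              ∏ j : Fin m, (Matrix.of fun a b : Fin (m + 1) => k ![x a] ![y b])
                (σ j.succ) (τ j.succ)) := by
      intro σ τ
      rw [compDF_eq]
      rfl
    rw [Finset.sum_congr rfl fun σ _ => Finset.sum_congr rfl fun τ _ => hconv σ τ]
    exact innerS (Matrix.of fun a b : Fin (m + 1) => k ![x a] ![y b])
      (fun a b => ∑ i : Fin n, k ![x a] ![bv n i] * k ![bv n i] ![y b])
  rw [hLL, trace_eq, hR1, hR2]
  have hS : (∑ b : Fin (m + 1), ∑ a : Fin (m + 1),
        (∑ i : Fin n, k ![x b] ![bv n i] * k ![bv n i] ![y a]) *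
          (-(-1 : ℝ) ^ ((a : ℕ) + (b : ℕ))) *
          ((Matrix.of fun a b : Fin (m + 1) => k ![x a] ![y b]).submatrix
            b.succAbove a.succAbove).det)
      + (∑ a : Fin (m + 1), ∑ b : Fin (m + 1),
        (∑ i : Fin n, k ![x a] ![bv n i] * k ![bv n i] ![y b]) *
          ((-1 : ℝ) ^ ((a : ℕ) + (b : ℕ)) *
            ((Matrix.of fun a b : Fin (m + 1) => k ![x a] ![y b]).submatrix
              a.succAbove b.succAbove).det)) = 0 := by
    rw [← Finset.sum_add_distrib]
    refine Finset.sum_eq_zero fun b _ => ?_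
    rw [← Finset.sum_add_distrib]
    refine Finset.sum_eq_zero fun a _ => ?_
    rw [show (b : ℕ) + (a : ℕ) = (a : ℕ) + (b : ℕ) from Nat.add_comm _ _]
    ring
  have f1 : ((m + 2).factorial : ℝ) = ((m + 2 : ℕ) : ℝ) * ((m + 1).factorial : ℝ) := by
    rw [show m + 2 = (m + 1) + 1 from rfl, Nat.factorial_succ]
    push_cast
    ring
  have f2 : ((m + 1).factorial : ℝ) = ((m + 1 : ℕ) : ℝ) * (m.factorial : ℝ) := by
    rw [Nat.factorial_succ]
    push_cast
    ring
  have hS' : (∑ b : Fin (m + 1), ∑ a : Fin (m + 1),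
        (∑ i : Fin n, k ![x b] ![bv n i] * k ![bv n i] ![y a]) *
          (-(-1 : ℝ) ^ ((a : ℕ) + (b : ℕ))) *
          ((Matrix.of fun a b : Fin (m + 1) => k ![x a] ![y b]).submatrix
            b.succAbove a.succAbove).det)
      = -(∑ a : Fin (m + 1), ∑ b : Fin (m + 1),
        (∑ i : Fin n, k ![x a] ![bv n i] * k ![bv n i] ![y b]) *
          ((-1 : ℝ) ^ ((a : ℕ) + (b : ℕ)) *
            ((Matrix.of fun a b : Fin (m + 1) => k ![x a] ![y b]).submatrix
              a.succAbove b.succAbove).det)) := by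
    linarith [hS]
  rw [hS', f1, f2]
  push_cast
  ring
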